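/- Let p be a prime with p ≡ 1 or 4 (mod 5) (so p ∉ {2, 5} and 5 is a square in ℤ_p). Let φ ∈ ℤ_p satisfy φ² = φ + 1, and let u ∈ ℤ_p satisfy u^{p−1} = 1 and ‖φ − u‖_p < 1. Then ‖F(p−1)‖_p = ‖φ − u‖_p (equivalently, since u is a unit, ‖F(p−1)‖_p = ‖φ·u^{−1} − 1‖_p). -/

import Mathlib

lemma fib_formula' {p : ℕ} [Fact p.Prime] (φ : ℤ_[p]) (hφ : φ ^ 2 = φ + 1) (n : ℕ) :
    (2*φ - 1) * (Nat.fib n : ℤ_[p]) = φ^n - (1-φ)^n := by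
  have hψ : (1-φ)^2 = (1-φ) + 1 := by linear_combination hφ
  induction n using Nat.twoStepInduction with
  | zero => simp
  | one => simp; ring
  | more n ih1 ih2 =>
    rw [Nat.fib_add_two]
    push_cast
    linear_combination ih2 + ih1 + ((1-φ)^n - φ^n) * hφ

lemma nat_norm_one' {p : ℕ} [hp : Fact p.Prime] (n : ℕ) (h : ¬ p ∣ n) :
    ‖(n : ℤ_[p])‖ = 1 := by
  refine le_antisymm (PadicInt.norm_le_one _) ?_
  by_contra hlt
  push_neg at hlt
  have : ((p:ℤ)) ∣ (n:ℤ) := by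
    rw [← PadicInt.norm_int_lt_one_iff_dvd]
    simpa using hlt
  exact h (by exact_mod_cast this)

theorem wall_exponent_characterization (p : ℕ) [Fact p.Prime]
    (hp5 : p % 5 = 1 ∨ p % 5 = 4)
    (φ u : ℤ_[p]) (hφ : φ ^ 2 = φ + 1)
    (hu : u ^ (p - 1) = 1) (hu2 : ‖φ - u‖ < 1) :
    ‖(Nat.fib (p - 1) : ℤ_[p])‖ = ‖φ - u‖ := by
  have hp : p.Prime := Fact.out
  have hp2 : p ≠ 2 := by rintro rfl; omega
  have hp5' : p ≠ 5 := by rintro rfl; omega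
  have hppos : 2 ≤ p := hp.two_le
  have hodd : Odd p := hp.odd_of_ne_two hp2
  -- norms of u and φ
  have hu1 : ‖u‖ = 1 := by
    have h := congrArg norm hu
    rw [norm_pow, norm_one] at h
    by_contra hne
    have hlt : ‖u‖ < 1 := lt_of_le_of_ne (PadicInt.norm_le_one u) hne
    have : ‖u‖ ^ (p-1) < 1 := pow_lt_one₀ (norm_nonneg u) hlt (by omega)
    rw [h] at this; exact lt_irrefl 1 this
  have hune : ‖φ - u‖ ≠ ‖u‖ := by rw [hu1]; exact ne_of_lt hu2
  have hφ1 : ‖φ‖ = 1 := by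
    have h : φ = (φ - u) + u := by ring
    rw [h, PadicInt.norm_add_eq_max_of_ne hune, hu1]
    exact max_eq_right (le_of_lt hu2)
  -- some unit norms
  have h2n : ‖(2 : ℤ_[p])‖ = 1 := by
    have := nat_norm_one' (p := p) 2
      (fun h => hp2 ((Nat.prime_dvd_prime_iff_eq hp Nat.prime_two).mp h))
    simpa using this
  have h5n : ‖(5 : ℤ_[p])‖ = 1 := by
    have := nat_norm_one' (p := p) 5
      (fun h => hp5' ((Nat.prime_dvd_prime_iff_eq hp (by norm_num)).mp h))
    simpa using this
  have hp1n : ‖((p-1 : ℕ) : ℤ_[p])‖ = 1 :=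
    nat_norm_one' (p-1) (Nat.not_dvd_of_pos_of_lt (by omega) (by omega))
  -- norm of 2φ-1
  have h2φ : ‖2*φ - 1‖ = 1 := by
    have hsq : (2*φ - 1)^2 = 5 := by linear_combination 4 * hφ
    have h := congrArg norm hsq
    rw [norm_pow, h5n] at h
    nlinarith [norm_nonneg (2*φ-1)]
  -- geometric sum
  set S : ℤ_[p] := ∑ i ∈ Finset.range (p-1), φ^i * u^(p-1-1-i) with hSdef
  have hgeom : S * (φ - u) = φ^(p-1) - u^(p-1) := geom_sum₂_mul φ u (p-1)
  have hc : ∑ i ∈ Finset.range (p-1), u^i * u^(p-1-1-i)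
      = ((p-1 : ℕ) : ℤ_[p]) * u^(p-2) := by
    rw [Finset.sum_congr rfl (fun i hi => ?_), Finset.sum_const, Finset.card_range,
      nsmul_eq_mul]
    rw [← pow_add]
    congr 1
    have := Finset.mem_range.mp hi
    omega
  have hdvd : (φ - u) ∣ S - ((p-1 : ℕ) : ℤ_[p]) * u^(p-2) := by
    rw [hSdef, ← hc, ← Finset.sum_sub_distrib]
    refine Finset.dvd_sum (fun i _ => ?_)
    have : φ^i * u^(p-1-1-i) - u^i * u^(p-1-1-i) = (φ^i - u^i) * u^(p-1-1-i) := by ring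
    rw [this]
    exact Dvd.dvd.mul_right (sub_dvd_pow_sub_pow φ u i) _
  have hdiffle : ‖S - ((p-1 : ℕ) : ℤ_[p]) * u^(p-2)‖ ≤ ‖φ - u‖ := by
    obtain ⟨c, hcc⟩ := hdvd
    rw [hcc, norm_mul]
    exact mul_le_of_le_one_right (norm_nonneg _) (PadicInt.norm_le_one c)
  have hmain1 : ‖((p-1 : ℕ) : ℤ_[p]) * u^(p-2)‖ = 1 := by
    rw [norm_mul, hp1n, norm_pow, hu1, one_pow, one_mul]
  have hS : ‖S‖ = 1 := by
    have h : S = ((p-1 : ℕ) : ℤ_[p]) * u^(p-2) + (S - ((p-1 : ℕ) : ℤ_[p]) * u^(p-2)) := by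
      ring
    rw [h, PadicInt.norm_add_eq_max_of_ne, hmain1]
    · exact max_eq_left (le_of_lt (lt_of_le_of_lt hdiffle hu2))
    · rw [hmain1]
      exact (ne_of_lt (lt_of_le_of_lt hdiffle hu2)).symm
  have h1 : ‖φ^(p-1) - 1‖ = ‖φ - u‖ := by
    rw [← hu, ← hgeom, norm_mul, hS, one_mul]
  have h2 : ‖φ^(p-1) + 1‖ = 1 := by
    have h : φ^(p-1) + 1 = (φ^(p-1) - 1) + 2 := by ring
    rw [h, PadicInt.norm_add_eq_max_of_ne, h1, h2n]
    · exact max_eq_right (le_of_lt hu2)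
    · rw [h1, h2n]; exact ne_of_lt hu2
  -- key identity
  have heven : Even (p - 1) := Nat.Odd.sub_odd hodd odd_one
  have hψprod : φ^(p-1) * (1-φ)^(p-1) = 1 := by
    rw [← mul_pow]
    have : φ * (1 - φ) = -1 := by linear_combination -hφ
    rw [this]
    exact heven.neg_one_pow
  have hkey : φ^(p-1) * ((2*φ - 1) * (Nat.fib (p-1) : ℤ_[p]))
      = (φ^(p-1) - 1) * (φ^(p-1) + 1) := by
    rw [fib_formula' φ hφ (p-1)]
    linear_combination -hψprod
  have hfin := congrArg norm hkey
  rw [norm_mul, norm_mul, norm_mul, norm_pow, hφ1,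
    one_pow, one_mul, h2φ, one_mul, h1, h2, mul_one] at hfin
  exact hfin
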